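/- arXiv:2405.15480 — 2 statements merged into one kernel-verified Lean document; each statement's English description precedes it below -/
import Mathlib

section
/- Let A : Ω → Sym_p(ℝ) be a measurable map from a probability space to real symmetric p×p matrices with E[‖A‖_F²] < ∞, and define the linear operator 𝓕 on real symmetric p×p matrices by 𝓕(M) = E[A M Aᵀ]. Let ν = sup{‖𝓕(M)‖_F : M symmetric, ‖M‖_F = 1}. If 𝓕 is not identically zero, then ν > 0 and there exists a nonzero positive semidefinite matrix M* with 𝓕(M*) = ν·M*; in particular the supremum is attained at a positive semidefinite matrix. -/
open MeasureTheory Matrix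

/-- The Frobenius norm of a real matrix. -/
noncomputable def frobNorm {p : ℕ} (M : Matrix (Fin p) (Fin p) ℝ) : ℝ :=
  Real.sqrt (∑ i, ∑ j, (M i j) ^ 2)

/-- The linearized state-evolution operator `𝓕(M) = E[A M Aᵀ]`. -/
noncomputable def linOp {Ω : Type*} [MeasurableSpace Ω] (P : Measure Ω) {p : ℕ}
    (A : Ω → Matrix (Fin p) (Fin p) ℝ) (M : Matrix (Fin p) (Fin p) ℝ) :
    Matrix (Fin p) (Fin p) ℝ :=
  Matrix.of fun i j => ∫ ω, (A ω * M * (A ω)ᵀ) i j ∂P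

attribute [local instance] Matrix.frobeniusSeminormedAddCommGroup
  Matrix.frobeniusNormedAddCommGroup Matrix.frobeniusNormedSpace

set_option linter.unusedSectionVars false

namespace KRaux

noncomputable def ip {p : ℕ} (X Y : Matrix (Fin p) (Fin p) ℝ) : ℝ :=
  ∑ i, ∑ j, X i j * Y i j

lemma frobNorm_eq_norm {p : ℕ} (M : Matrix (Fin p) (Fin p) ℝ) : frobNorm M = ‖M‖ := by
  rw [Matrix.frobenius_norm_def, frobNorm, Real.sqrt_eq_rpow]
  congr 1
  refine Finset.sum_congr rfl fun i _ => Finset.sum_congr rfl fun j _ => ?_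
  rw [Real.norm_eq_abs, Real.rpow_two, sq_abs]

lemma ip_self_eq {p : ℕ} (M : Matrix (Fin p) (Fin p) ℝ) : ip M M = ‖M‖ ^ 2 := by
  rw [← frobNorm_eq_norm, frobNorm, Real.sq_sqrt]
  · simp [ip, sq]
  · positivity

lemma ip_comm {p : ℕ} (X Y : Matrix (Fin p) (Fin p) ℝ) : ip X Y = ip Y X := by
  simp [ip, mul_comm]

lemma ip_add_left {p : ℕ} (X Y Z : Matrix (Fin p) (Fin p) ℝ) :
    ip (X + Y) Z = ip X Z + ip Y Z := by
  simp [ip, add_mul, Finset.sum_add_distrib]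

lemma ip_add_right {p : ℕ} (X Y Z : Matrix (Fin p) (Fin p) ℝ) :
    ip X (Y + Z) = ip X Y + ip X Z := by
  simp [ip, mul_add, Finset.sum_add_distrib]

lemma ip_sub_left {p : ℕ} (X Y Z : Matrix (Fin p) (Fin p) ℝ) :
    ip (X - Y) Z = ip X Z - ip Y Z := by
  simp [ip, sub_mul, Finset.sum_sub_distrib]

lemma ip_sub_right {p : ℕ} (X Y Z : Matrix (Fin p) (Fin p) ℝ) :
    ip X (Y - Z) = ip X Y - ip X Z := by
  simp [ip, mul_sub, Finset.sum_sub_distrib]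

lemma ip_smul_left {p : ℕ} (c : ℝ) (X Z : Matrix (Fin p) (Fin p) ℝ) :
    ip (c • X) Z = c * ip X Z := by
  simp [ip, Finset.mul_sum, mul_assoc]

lemma ip_smul_right {p : ℕ} (c : ℝ) (X Z : Matrix (Fin p) (Fin p) ℝ) :
    ip X (c • Z) = c * ip X Z := by
  simp [ip, Finset.mul_sum]
  exact Finset.sum_congr rfl fun i _ => Finset.sum_congr rfl fun j _ => by ring

lemma ip_eq_trace {p : ℕ} (X Y : Matrix (Fin p) (Fin p) ℝ) : ip X Y = (Xᵀ * Y).trace := by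
  simp [ip, Matrix.trace, Matrix.mul_apply, Matrix.diag]
  rw [Finset.sum_comm]

lemma trace_transpose_mul_self_nonneg {p : ℕ} (E : Matrix (Fin p) (Fin p) ℝ) :
    0 ≤ (Eᵀ * E).trace := by
  have : (Eᵀ * E).trace = ∑ j, ∑ i, (E i j) ^ 2 := by
    simp [Matrix.trace, Matrix.mul_apply, Matrix.diag, sq]
  rw [this]; positivity

lemma trace_mul_nonneg_of_posSemidef {p : ℕ} {X Y : Matrix (Fin p) (Fin p) ℝ}
    (hX : X.PosSemidef) (hY : Y.PosSemidef) : 0 ≤ (X * Y).trace := by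
  obtain ⟨C, rfl⟩ : ∃ C : Matrix (Fin p) (Fin p) ℝ, X = Cᴴ * C := by
    open scoped MatrixOrder in
    obtain ⟨C, hC⟩ := CStarAlgebra.nonneg_iff_eq_star_mul_self.mp hX.nonneg
    exact ⟨C, hC⟩
  obtain ⟨D, rfl⟩ : ∃ D : Matrix (Fin p) (Fin p) ℝ, Y = Dᴴ * D := by
    open scoped MatrixOrder in
    obtain ⟨D, hD⟩ := CStarAlgebra.nonneg_iff_eq_star_mul_self.mp hY.nonneg
    exact ⟨D, hD⟩
  have h1 : (Cᴴ * C * (Dᴴ * D)).trace = ((C * Dᴴ)ᵀ * (C * Dᴴ)).trace := by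
    rw [Matrix.transpose_mul]
    rw [show (Dᴴ)ᵀ = D by simp [Matrix.conjTranspose_eq_transpose_of_trivial]]
    rw [show Cᵀ = Cᴴ by simp [Matrix.conjTranspose_eq_transpose_of_trivial]]
    rw [Matrix.trace_mul_comm (Cᴴ * C) (Dᴴ * D), Matrix.trace_mul_comm (D * Cᴴ) (C * Dᴴ)]
    simp only [Matrix.mul_assoc]
    rw [Matrix.trace_mul_comm C (Dᴴ * (D * Cᴴ))]
    simp only [Matrix.mul_assoc]
  rw [h1]
  exact trace_transpose_mul_self_nonneg _

lemma ip_conj {p : ℕ} {U : Matrix (Fin p) (Fin p) ℝ} (hU : U ∈ Matrix.unitaryGroup (Fin p) ℝ)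
    (d e : Fin p → ℝ) :
    ip (U * Matrix.diagonal d * star U) (U * Matrix.diagonal e * star U) = ∑ i, d i * e i := by
  have hsU : star U = Uᵀ := by
    rw [Matrix.star_eq_conjTranspose, Matrix.conjTranspose_eq_transpose_of_trivial]
  have hUU : Uᵀ * U = 1 := by
    rw [← hsU]; exact (Matrix.mem_unitaryGroup_iff').mp hU
  rw [ip_eq_trace, hsU]
  have htr : (U * Matrix.diagonal d * Uᵀ)ᵀ = U * Matrix.diagonal d * Uᵀ := by
    simp [Matrix.transpose_mul, Matrix.mul_assoc]
  rw [htr]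
  rw [show U * Matrix.diagonal d * Uᵀ * (U * Matrix.diagonal e * Uᵀ)
      = U * (Matrix.diagonal d * (Uᵀ * U) * Matrix.diagonal e) * Uᵀ by
    simp only [Matrix.mul_assoc]]
  rw [hUU, Matrix.mul_one, Matrix.trace_mul_cycle, ← Matrix.mul_assoc, hUU, Matrix.one_mul,
    Matrix.diagonal_mul_diagonal, Matrix.trace_diagonal]

lemma exists_posSemidef_decomp {p : ℕ} {X : Matrix (Fin p) (Fin p) ℝ} (hX : X.IsSymm) :
    ∃ Q R : Matrix (Fin p) (Fin p) ℝ, Q.PosSemidef ∧ R.PosSemidef ∧ X = Q - R ∧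
      ip (Q + R) (Q + R) = ip X X := by
  have hH : X.IsHermitian := by
    rwa [Matrix.IsHermitian, Matrix.conjTranspose_eq_transpose_of_trivial]
  set U : Matrix (Fin p) (Fin p) ℝ := (hH.eigenvectorUnitary : Matrix (Fin p) (Fin p) ℝ) with hUdef
  have hUmem : U ∈ Matrix.unitaryGroup (Fin p) ℝ := hH.eigenvectorUnitary.2
  set lam := hH.eigenvalues with hlam
  have hspec : X = U * Matrix.diagonal lam * star U := by
    have := hH.spectral_theorem
    rwa [show RCLike.ofReal ∘ lam = lam by simp [RCLike.ofReal_real_eq_id]] at this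
  refine ⟨U * Matrix.diagonal (fun i => max (lam i) 0) * star U,
          U * Matrix.diagonal (fun i => max (-(lam i)) 0) * star U, ?_, ?_, ?_, ?_⟩
  · exact (Matrix.posSemidef_diagonal_iff.mpr fun i => le_max_right _ _).mul_mul_conjTranspose_same U
  · exact (Matrix.posSemidef_diagonal_iff.mpr fun i => le_max_right _ _).mul_mul_conjTranspose_same U
  · rw [hspec]
    simp only [← Matrix.sub_mul, ← Matrix.mul_sub, Matrix.diagonal_sub]
    have hfun : lam = fun i => max (lam i) 0 - max (-(lam i)) 0 := by
      funext i
      rcases le_total (lam i) 0 with h | h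
      · rw [max_eq_right h, max_eq_left (by linarith : (0:ℝ) ≤ -(lam i))]; ring
      · rw [max_eq_left h, max_eq_right (by linarith : -(lam i) ≤ 0)]; ring
    rw [← hfun]
  · rw [show U * Matrix.diagonal (fun i => max (lam i) 0) * star U
        + U * Matrix.diagonal (fun i => max (-(lam i)) 0) * star U
        = U * Matrix.diagonal (fun i => |lam i|) * star U by
      simp only [← Matrix.add_mul, ← Matrix.mul_add, Matrix.diagonal_add]
      have hfun : (fun i => max (lam i) 0 + max (-(lam i)) 0) = fun i => |lam i| := by
        funext i
        rcases le_total (lam i) 0 with h | h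
        · rw [max_eq_right h, max_eq_left (by linarith : (0:ℝ) ≤ -(lam i)), abs_of_nonpos h]; ring
        · rw [max_eq_left h, max_eq_right (by linarith : -(lam i) ≤ 0), abs_of_nonneg h]; ring
      rw [hfun]]
    rw [hspec, ip_conj hUmem, ip_conj hUmem]
    exact Finset.sum_congr rfl fun i _ => abs_mul_abs_self _

lemma ip_pointwise_symm {p : ℕ} (B X Y : Matrix (Fin p) (Fin p) ℝ) (hB : B.IsSymm) :
    ip (B * X * Bᵀ) Y = ip X (B * Y * Bᵀ) := by
  rw [ip_eq_trace, ip_eq_trace, Matrix.transpose_mul, Matrix.transpose_mul,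
    Matrix.transpose_transpose, hB.eq]
  rw [Matrix.trace_mul_cycle]
  simp only [Matrix.mul_assoc]
  rw [show Y * (B * (Xᵀ * B)) = (Y * B) * (Xᵀ * B) by simp only [Matrix.mul_assoc],
    Matrix.trace_mul_comm]
  simp only [Matrix.mul_assoc]

section Int
variable {Ω : Type*} [MeasurableSpace Ω] (P : Measure Ω) [IsProbabilityMeasure P] {p : ℕ}
  (A : Ω → Matrix (Fin p) (Fin p) ℝ)
  (hAmeas : ∀ i j, Measurable fun ω => A ω i j)
  (hAint : Integrable (fun ω => ∑ i, ∑ j, (A ω i j) ^ 2) P)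

include hAmeas hAint

lemma integrable_prod (i k j l : Fin p) :
    Integrable (fun ω => A ω i k * A ω j l) P := by
  refine Integrable.mono' hAint (((hAmeas i k).mul (hAmeas j l)).aestronglyMeasurable) ?_
  refine Filter.Eventually.of_forall fun ω => ?_
  have h1 : (A ω i k) ^ 2 ≤ ∑ i', ∑ j', (A ω i' j') ^ 2 := by
    calc (A ω i k) ^ 2 ≤ ∑ j', (A ω i j') ^ 2 :=
          Finset.single_le_sum (f := fun j' => (A ω i j') ^ 2) (fun j' _ => sq_nonneg _)
            (Finset.mem_univ k)
    _ ≤ ∑ i', ∑ j', (A ω i' j') ^ 2 :=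
          Finset.single_le_sum (f := fun i' => ∑ j', (A ω i' j') ^ 2)
            (fun i' _ => Finset.sum_nonneg fun j' _ => sq_nonneg _) (Finset.mem_univ i)
  have h2 : (A ω j l) ^ 2 ≤ ∑ i', ∑ j', (A ω i' j') ^ 2 := by
    calc (A ω j l) ^ 2 ≤ ∑ j', (A ω j j') ^ 2 :=
          Finset.single_le_sum (f := fun j' => (A ω j j') ^ 2) (fun j' _ => sq_nonneg _)
            (Finset.mem_univ l)
    _ ≤ ∑ i', ∑ j', (A ω i' j') ^ 2 :=
          Finset.single_le_sum (f := fun i' => ∑ j', (A ω i' j') ^ 2)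
            (fun i' _ => Finset.sum_nonneg fun j' _ => sq_nonneg _) (Finset.mem_univ j)
  rw [Real.norm_eq_abs, abs_mul]
  nlinarith [abs_nonneg (A ω i k), abs_nonneg (A ω j l), sq_abs (A ω i k), sq_abs (A ω j l),
    sq_nonneg (|A ω i k| - |A ω j l|)]

lemma integrable_entry (M : Matrix (Fin p) (Fin p) ℝ) (i j : Fin p) :
    Integrable (fun ω => (A ω * M * (A ω)ᵀ) i j) P := by
  have : (fun ω => (A ω * M * (A ω)ᵀ) i j)
      = fun ω => ∑ k, ∑ l, M k l * (A ω i k * A ω j l) := by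
    funext ω
    simp only [Matrix.mul_apply, Matrix.transpose_apply, Finset.sum_mul]
    rw [Finset.sum_comm]
    refine Finset.sum_congr rfl fun k _ => Finset.sum_congr rfl fun l _ => by ring
  rw [this]
  exact integrable_finset_sum _ fun k _ => integrable_finset_sum _ fun l _ =>
    ((integrable_prod P A hAmeas hAint i k j l).const_mul _)

lemma linOp_add (M N : Matrix (Fin p) (Fin p) ℝ) :
    linOp P A (M + N) = linOp P A M + linOp P A N := by
  ext i j
  have : (fun ω => (A ω * (M + N) * (A ω)ᵀ) i j)
      = fun ω => (A ω * M * (A ω)ᵀ) i j + (A ω * N * (A ω)ᵀ) i j := by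
    funext ω
    simp [Matrix.mul_add, Matrix.add_mul]
  simp only [linOp, Matrix.of_apply, Matrix.add_apply]
  rw [this, integral_add (integrable_entry P A hAmeas hAint M i j)
    (integrable_entry P A hAmeas hAint N i j)]

lemma linOp_smul (c : ℝ) (M : Matrix (Fin p) (Fin p) ℝ) :
    linOp P A (c • M) = c • linOp P A M := by
  ext i j
  have : (fun ω => (A ω * (c • M) * (A ω)ᵀ) i j) = fun ω => c * (A ω * M * (A ω)ᵀ) i j := by
    funext ω
    simp [Matrix.mul_smul, Matrix.smul_mul]
  simp only [linOp, Matrix.of_apply, Matrix.smul_apply, smul_eq_mul]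
  rw [this, integral_const_mul]

lemma linOp_isSymm {M : Matrix (Fin p) (Fin p) ℝ} (hM : M.IsSymm) : (linOp P A M).IsSymm := by
  rw [Matrix.IsSymm]
  ext i j
  simp only [linOp, Matrix.transpose_apply, Matrix.of_apply]
  congr 1
  funext ω
  calc (A ω * M * (A ω)ᵀ) j i = ((A ω * M * (A ω)ᵀ)ᵀ) i j := rfl
  _ = (A ω * M * (A ω)ᵀ) i j := by
      rw [Matrix.transpose_mul, Matrix.transpose_mul, Matrix.transpose_transpose, hM.eq,
        Matrix.mul_assoc]

lemma ip_linOp_left (M Y : Matrix (Fin p) (Fin p) ℝ) :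
    ip (linOp P A M) Y = ∫ ω, ip (A ω * M * (A ω)ᵀ) Y ∂P := by
  have hInt : ∀ (i j : Fin p), Integrable (fun ω => (A ω * M * (A ω)ᵀ) i j * Y i j) P :=
    fun i j => (integrable_entry P A hAmeas hAint M i j).mul_const _
  calc ip (linOp P A M) Y
      = ∑ i, ∑ j, ∫ ω, (A ω * M * (A ω)ᵀ) i j * Y i j ∂P := by
        simp only [ip, linOp, Matrix.of_apply]
        exact Finset.sum_congr rfl fun i _ => Finset.sum_congr rfl fun j _ =>
          (integral_mul_const _ _).symm
    _ = ∑ i, ∫ ω, ∑ j, (A ω * M * (A ω)ᵀ) i j * Y i j ∂P :=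
        Finset.sum_congr rfl fun i _ => (integral_finset_sum _ fun j _ => hInt i j).symm
    _ = ∫ ω, ∑ i, ∑ j, (A ω * M * (A ω)ᵀ) i j * Y i j ∂P :=
        (integral_finset_sum _ fun i _ => integrable_finset_sum _ fun j _ => hInt i j).symm
    _ = ∫ ω, ip (A ω * M * (A ω)ᵀ) Y ∂P := rfl

lemma linOp_selfAdjoint (hAsymm : ∀ ω, (A ω).IsSymm) (X Y : Matrix (Fin p) (Fin p) ℝ) :
    ip (linOp P A X) Y = ip X (linOp P A Y) := by
  rw [ip_linOp_left P A hAmeas hAint, ip_comm, ip_linOp_left P A hAmeas hAint]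
  rw [show (fun ω => ip (A ω * X * (A ω)ᵀ) Y) = fun ω => ip (A ω * Y * (A ω)ᵀ) X from
    funext fun ω => by rw [ip_pointwise_symm _ _ _ (hAsymm ω), ip_comm]]

lemma ip_linOp_nonneg {X Y : Matrix (Fin p) (Fin p) ℝ} (hX : X.PosSemidef) (hY : Y.PosSemidef) :
    0 ≤ ip (linOp P A X) Y := by
  rw [ip_linOp_left P A hAmeas hAint]
  refine integral_nonneg fun ω => ?_
  have hP : (A ω * X * (A ω)ᵀ).PosSemidef := by
    rw [← Matrix.conjTranspose_eq_transpose_of_trivial]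
    exact hX.mul_mul_conjTranspose_same (A ω)
  rw [ip_eq_trace]
  rw [show (A ω * X * (A ω)ᵀ)ᵀ = A ω * X * (A ω)ᵀ by
    rw [← Matrix.conjTranspose_eq_transpose_of_trivial]; exact hP.isHermitian.eq]
  exact trace_mul_nonneg_of_posSemidef hP hY

end Int

lemma psd_add {p : ℕ} {Q R : Matrix (Fin p) (Fin p) ℝ} (hQ : Q.PosSemidef)
    (hR : R.PosSemidef) : (Q + R).PosSemidef :=
  ⟨hQ.1.add hR.1, fun x => by
    simpa [mul_add, add_mul] using add_nonneg (hQ.2 x) (hR.2 x)⟩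

lemma psd_isSymm {p : ℕ} {Q : Matrix (Fin p) (Fin p) ℝ} (hQ : Q.PosSemidef) : Q.IsSymm := by
  rw [Matrix.IsSymm, ← Matrix.conjTranspose_eq_transpose_of_trivial]
  exact hQ.isHermitian.eq

lemma quad_le {a b c : ℝ} (hc : 0 ≤ c) (h : ∀ t : ℝ, 0 ≤ a + 2 * b * t + c * t ^ 2) :
    b ^ 2 ≤ a * c := by
  rcases eq_or_lt_of_le hc with hc0 | hc0
  · have hb : b = 0 := by
      by_contra hb
      have h0 := h (-(a + b ^ 2) / (2 * b))
      rw [← hc0] at h0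
      have heq : 2 * b * (-(a + b ^ 2) / (2 * b)) = -(a + b ^ 2) := by
        field_simp
      rw [heq] at h0
      ring_nf at h0
      have hb2 : b ^ 2 ≠ 0 := pow_ne_zero 2 hb
      have hb3 : 0 < b ^ 2 := lt_of_le_of_ne (sq_nonneg b) (Ne.symm hb2)
      linarith
    have ha : 0 ≤ a := by simpa using h 0
    nlinarith
  · have h0 := h (-(b / c))
    have : a + 2 * b * (-(b / c)) + c * (-(b / c)) ^ 2 = a - b ^ 2 / c := by
      field_simp; ring
    rw [this] at h0
    calc b ^ 2 = (b ^ 2 / c) * c := by field_simp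
    _ ≤ a * c := by nlinarith

lemma ip_cauchySchwarz {p : ℕ} (X Y : Matrix (Fin p) (Fin p) ℝ) :
    |ip X Y| ≤ ‖X‖ * ‖Y‖ := by
  have h : ∀ t : ℝ, 0 ≤ ip X X + 2 * ip X Y * t + ip Y Y * t ^ 2 := by
    intro t
    have h0 : 0 ≤ ip (X + t • Y) (X + t • Y) := by rw [ip_self_eq]; positivity
    rw [ip_add_left, ip_add_right, ip_add_right, ip_smul_left, ip_smul_right, ip_smul_right,
      ip_smul_left, ip_comm Y X] at h0
    convert h0 using 1
    ring
  have hb := quad_le (by rw [ip_self_eq]; positivity) h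
  rw [ip_self_eq, ip_self_eq] at hb
  nlinarith [sq_abs (ip X Y), abs_nonneg (ip X Y), norm_nonneg X, norm_nonneg Y,
    mul_nonneg (norm_nonneg X) (norm_nonneg Y)]


section TL
variable {Ω : Type*} [MeasurableSpace Ω] (P : Measure Ω) [IsProbabilityMeasure P] {p : ℕ}
  (A : Ω → Matrix (Fin p) (Fin p) ℝ)
  (hAmeas : ∀ i j, Measurable fun ω => A ω i j)
  (hAint : Integrable (fun ω => ∑ i, ∑ j, (A ω i j) ^ 2) P)

/-- `linOp` as a linear map. -/
noncomputable def TL : Matrix (Fin p) (Fin p) ℝ →ₗ[ℝ] Matrix (Fin p) (Fin p) ℝ where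
  toFun := linOp P A
  map_add' := linOp_add P A hAmeas hAint
  map_smul' := fun c M => by simpa using linOp_smul P A hAmeas hAint c M

@[simp] lemma TL_apply (M : Matrix (Fin p) (Fin p) ℝ) :
    TL P A hAmeas hAint M = linOp P A M := rfl

lemma entry_continuous (i j : Fin p) :
    Continuous fun M : Matrix (Fin p) (Fin p) ℝ => M i j :=
  LinearMap.continuous_of_finiteDimensional
    (⟨⟨fun M => M i j, fun _ _ => rfl⟩, fun _ _ => rfl⟩ : Matrix (Fin p) (Fin p) ℝ →ₗ[ℝ] ℝ)

lemma transpose_continuous :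
    Continuous fun M : Matrix (Fin p) (Fin p) ℝ => Mᵀ :=
  LinearMap.continuous_of_finiteDimensional
    (⟨⟨fun M : Matrix (Fin p) (Fin p) ℝ => Mᵀ, fun _ _ => Matrix.transpose_add _ _⟩,
      fun _ _ => Matrix.transpose_smul _ _⟩ : Matrix (Fin p) (Fin p) ℝ →ₗ[ℝ] Matrix (Fin p) (Fin p) ℝ)

lemma smul_isSymm {c : ℝ} {X : Matrix (Fin p) (Fin p) ℝ} (hX : X.IsSymm) : (c • X).IsSymm := by
  rw [Matrix.IsSymm, Matrix.transpose_smul, hX.eq]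

end TL
end KRaux

open KRaux

/-- Perron–Frobenius / Krein–Rutman step: if the cone-preserving operator
`𝓕(M) = E[A M Aᵀ]` is not identically zero on symmetric matrices, then its
Frobenius operator norm `ν` over symmetric matrices is positive, is an
eigenvalue with a nonzero positive semidefinite eigenvector `M*`, and the
supremum is attained at a positive semidefinite matrix. -/
theorem kreinRutman_for_linearized_SE {Ω : Type*} [MeasurableSpace Ω]
    (P : Measure Ω) [IsProbabilityMeasure P] {p : ℕ}
    (A : Ω → Matrix (Fin p) (Fin p) ℝ)
    (hAmeas : ∀ i j, Measurable fun ω => A ω i j)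
    (hAsymm : ∀ ω, (A ω).IsSymm)
    (hAint : Integrable (fun ω => ∑ i, ∑ j, (A ω i j) ^ 2) P)
    (hne : ∃ M : Matrix (Fin p) (Fin p) ℝ, M.IsSymm ∧ linOp P A M ≠ 0) :
    0 < sSup {x : ℝ | ∃ M : Matrix (Fin p) (Fin p) ℝ,
        M.IsSymm ∧ frobNorm M = 1 ∧ x = frobNorm (linOp P A M)} ∧
      (∃ Mstar : Matrix (Fin p) (Fin p) ℝ, Mstar.PosSemidef ∧ Mstar ≠ 0 ∧
        linOp P A Mstar =
          (sSup {x : ℝ | ∃ M : Matrix (Fin p) (Fin p) ℝ,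
            M.IsSymm ∧ frobNorm M = 1 ∧ x = frobNorm (linOp P A M)}) • Mstar) ∧
      (∃ M₀ : Matrix (Fin p) (Fin p) ℝ, M₀.PosSemidef ∧ frobNorm M₀ = 1 ∧
        frobNorm (linOp P A M₀) =
          sSup {x : ℝ | ∃ M : Matrix (Fin p) (Fin p) ℝ,
            M.IsSymm ∧ frobNorm M = 1 ∧ x = frobNorm (linOp P A M)}) := by
  classical
  rcases Nat.eq_zero_or_pos p with hp | hp
  · subst hp
    obtain ⟨M, -, hM⟩ := hne
    exact absurd (by ext i j; exact i.elim0) hM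
  -- notation
  set T := TL P A hAmeas hAint with hTdef
  set S := {x : ℝ | ∃ M : Matrix (Fin p) (Fin p) ℝ,
      M.IsSymm ∧ frobNorm M = 1 ∧ x = frobNorm (linOp P A M)} with hSdef
  set sph : Set (Matrix (Fin p) (Fin p) ℝ) := {M | M.IsSymm ∧ ‖M‖ = 1} with hsphdef
  have hTc : Continuous T := T.continuous_of_finiteDimensional
  -- compactness of the symmetric unit sphere
  have hclosed : IsClosed sph := by
    have h1 : IsClosed {M : Matrix (Fin p) (Fin p) ℝ | Mᵀ = M} :=
      isClosed_eq (transpose_continuous) continuous_id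
    exact h1.inter (isClosed_eq continuous_norm continuous_const)
  have hsub : sph ⊆ Metric.closedBall 0 1 := fun M hM =>
    mem_closedBall_zero_iff.mpr (le_of_eq hM.2)
  have hcpt : IsCompact sph :=
    (isCompact_closedBall (0 : Matrix (Fin p) (Fin p) ℝ) 1).of_isClosed_subset hclosed hsub
  -- the sphere is nonempty
  have hpR : (0 : ℝ) < p := by exact_mod_cast hp
  have hone : ‖(1 : Matrix (Fin p) (Fin p) ℝ)‖ = Real.sqrt p := by
    have h1 : ip (1 : Matrix (Fin p) (Fin p) ℝ) 1 = (p : ℝ) := by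
      simp [ip, Matrix.one_apply]
    have h3 : ‖(1 : Matrix (Fin p) (Fin p) ℝ)‖ ^ 2 = (p : ℝ) := by rw [← ip_self_eq]; exact h1
    rw [← h3, Real.sqrt_sq (norm_nonneg _)]
  have hsq : (0:ℝ) < Real.sqrt p := Real.sqrt_pos.mpr hpR
  have hE₁ : ((Real.sqrt p)⁻¹ • (1 : Matrix (Fin p) (Fin p) ℝ)) ∈ sph := by
    constructor
    · exact smul_isSymm (by rw [Matrix.IsSymm, Matrix.transpose_one])
    · rw [norm_smul, hone, Real.norm_eq_abs, abs_of_pos (by positivity),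
        inv_mul_cancel₀ (ne_of_gt hsq)]
  have hsphne : sph.Nonempty := ⟨_, hE₁⟩
  -- continuity of the two objective functions
  have hfc : Continuous fun M : Matrix (Fin p) (Fin p) ℝ => ‖T M‖ := hTc.norm
  have hgc : Continuous fun M : Matrix (Fin p) (Fin p) ℝ => ip (T M) M := by
    have : (fun M : Matrix (Fin p) (Fin p) ℝ => ip (T M) M)
        = fun M : Matrix (Fin p) (Fin p) ℝ => ∑ i, ∑ j, (T M) i j * M i j := rfl
    rw [this]
    exact continuous_finset_sum _ fun i _ => continuous_finset_sum _ fun j _ =>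
      (((entry_continuous i j).comp hTc).mul
        (entry_continuous i j))
  -- maximizers
  obtain ⟨Mm, hMm, hMmax⟩ := hcpt.exists_isMaxOn hsphne hfc.continuousOn
  obtain ⟨M₂, hM₂, hRmax⟩ := hcpt.exists_isMaxOn hsphne hgc.continuousOn
  set μ := ip (T M₂) M₂ with hμdef
  -- description of S
  have hmemS : ∀ x, x ∈ S ↔ ∃ M ∈ sph, ‖T M‖ = x := by
    intro x
    constructor
    · rintro ⟨M, hs, hn, rfl⟩
      exact ⟨M, ⟨hs, by rwa [← frobNorm_eq_norm]⟩, (frobNorm_eq_norm _).symm⟩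
    · rintro ⟨M, ⟨hs, hn⟩, rfl⟩
      exact ⟨M, hs, by rwa [frobNorm_eq_norm], (frobNorm_eq_norm _).symm⟩
  have hbdd : BddAbove S := by
    refine ⟨‖T Mm‖, fun x hx => ?_⟩
    obtain ⟨M, hM, rfl⟩ := (hmemS x).mp hx
    exact hMmax hM
  have hSne : S.Nonempty := ⟨‖T _‖, (hmemS _).mpr ⟨_, hE₁, rfl⟩⟩
  have hν : sSup S = ‖T Mm‖ := by
    refine le_antisymm (csSup_le hSne fun x hx => ?_) (le_csSup hbdd ((hmemS _).mpr ⟨Mm, hMm, rfl⟩))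
    obtain ⟨M, hM, rfl⟩ := (hmemS x).mp hx
    exact hMmax hM
  -- self-adjointness and positivity
  have hsa : ∀ X Y : Matrix (Fin p) (Fin p) ℝ, ip (T X) Y = ip X (T Y) := fun X Y =>
    linOp_selfAdjoint P A hAmeas hAint hAsymm X Y
  have hpos : ∀ {X Y : Matrix (Fin p) (Fin p) ℝ}, X.PosSemidef → Y.PosSemidef →
      0 ≤ ip (T X) Y := fun hX hY => ip_linOp_nonneg P A hAmeas hAint hX hY
  -- |Rayleigh| bounded by μ on the unit sphere
  have habs1 : ∀ X : Matrix (Fin p) (Fin p) ℝ, X.IsSymm → ‖X‖ = 1 → |ip (T X) X| ≤ μ := by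
    intro X hXs hX1
    obtain ⟨Q, R, hQ, hR, hXQR, hipQR⟩ := exists_posSemidef_decomp hXs
    have hQRs : (Q + R).IsSymm := psd_isSymm (psd_add hQ hR)
    have hQRn : ‖Q + R‖ = 1 := by
      have h2 : ‖Q + R‖ ^ 2 = 1 := by rw [← ip_self_eq, hipQR, ip_self_eq, hX1, one_pow]
      have h4 : (‖Q + R‖ - 1) * (‖Q + R‖ + 1) = 0 := by linear_combination h2
      rcases mul_eq_zero.mp h4 with h | h
      · linarith
      · linarith [norm_nonneg (Q + R)]
    have hcross : ip (T R) Q = ip (T Q) R := by rw [hsa R Q, ip_comm]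
    have e1 : ip (T X) X = ip (T Q) Q + ip (T R) R - 2 * ip (T Q) R := by
      rw [hXQR, map_sub, ip_sub_left, ip_sub_right, ip_sub_right]
      linarith [hcross]
    have e2 : ip (T (Q + R)) (Q + R) = ip (T Q) Q + ip (T R) R + 2 * ip (T Q) R := by
      rw [map_add, ip_add_left, ip_add_right, ip_add_right]
      linarith [hcross]
    have h3 : ip (T (Q + R)) (Q + R) ≤ μ := hRmax ⟨hQRs, hQRn⟩
    have hQQ := hpos hQ hQ
    have hRR := hpos hR hR
    have hQR' := hpos hQ hR
    rw [e1]
    rw [e2] at h3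
    refine abs_le.mpr ⟨by linarith, by linarith⟩
  -- homogeneous version
  have habs : ∀ X : Matrix (Fin p) (Fin p) ℝ, X.IsSymm → |ip (T X) X| ≤ μ * ‖X‖ ^ 2 := by
    intro X hXs
    by_cases hX0 : X = 0
    · subst hX0
      simp [map_zero, ip]
    · have hc : (0:ℝ) < ‖X‖ := norm_pos_iff.mpr hX0
      have h1 := habs1 (‖X‖⁻¹ • X) (smul_isSymm hXs)
        (by rw [norm_smul, Real.norm_eq_abs, abs_of_pos (by positivity),
          inv_mul_cancel₀ (ne_of_gt hc)])
      have h2 : |ip (T (‖X‖⁻¹ • X)) (‖X‖⁻¹ • X)| = ‖X‖⁻¹ * (‖X‖⁻¹ * |ip (T X) X|) := by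
        rw [_root_.map_smul, ip_smul_left, ip_smul_right, abs_mul, abs_mul,
          abs_of_pos (show (0:ℝ) < ‖X‖⁻¹ by positivity)]
      rw [h2] at h1
      have h3 := mul_le_mul_of_nonneg_left h1 (sq_nonneg ‖X‖)
      calc |ip (T X) X| = ‖X‖ ^ 2 * (‖X‖⁻¹ * (‖X‖⁻¹ * |ip (T X) X|)) := by
            field_simp
      _ ≤ ‖X‖ ^ 2 * μ := h3
      _ = μ * ‖X‖ ^ 2 := by ring
  have hμ0 : 0 ≤ μ := by
    have := habs1 M₂ hM₂.1 hM₂.2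
    have h2 := abs_nonneg (ip (T M₂) M₂)
    linarith
  -- sSup S = μ
  have hμν : μ ≤ sSup S := by
    have h1 : μ ≤ |μ| := le_abs_self μ
    have h2 : |ip (T M₂) M₂| ≤ ‖T M₂‖ * ‖M₂‖ := ip_cauchySchwarz _ _
    have h3 : ‖T M₂‖ ∈ S := (hmemS _).mpr ⟨M₂, hM₂, rfl⟩
    have h4 := le_csSup hbdd h3
    rw [hM₂.2, mul_one] at h2
    calc μ ≤ |μ| := h1
    _ ≤ ‖T M₂‖ := h2
    _ ≤ sSup S := h4
  have hνμ : sSup S ≤ μ := by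
    rw [hν]
    by_cases hTm : T Mm = 0
    · rw [hTm, norm_zero]; exact hμ0
    · have hTn : (0:ℝ) < ‖T Mm‖ := norm_pos_iff.mpr hTm
      set Y := ‖T Mm‖⁻¹ • T Mm with hYdef
      have hYs : Y.IsSymm := smul_isSymm (linOp_isSymm P A hAmeas hAint hMm.1)
      have hY1 : ‖Y‖ = 1 := by
        rw [hYdef, norm_smul, Real.norm_eq_abs, abs_of_pos (by positivity),
          inv_mul_cancel₀ (ne_of_gt hTn)]
      have hipval : ip (T Mm) Y = ‖T Mm‖ := by
        rw [hYdef, ip_smul_right, ip_self_eq]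
        field_simp
      have hcross : ip (T Y) Mm = ip (T Mm) Y := by rw [hsa Y Mm, ip_comm]
      have hMmYs : (Mm + Y).IsSymm := by rw [Matrix.IsSymm, Matrix.transpose_add, hMm.1.eq, hYs.eq]
      have hMmYs' : (Mm - Y).IsSymm := by rw [Matrix.IsSymm, Matrix.transpose_sub, hMm.1.eq, hYs.eq]
      have ep : ip (T (Mm + Y)) (Mm + Y)
          = ip (T Mm) Mm + 2 * ip (T Mm) Y + ip (T Y) Y := by
        rw [map_add, ip_add_left, ip_add_right, ip_add_right]
        linarith [hcross]
      have em : ip (T (Mm - Y)) (Mm - Y)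
          = ip (T Mm) Mm - 2 * ip (T Mm) Y + ip (T Y) Y := by
        rw [map_sub, ip_sub_left, ip_sub_right, ip_sub_right]
        linarith [hcross]
      have hpar : ‖Mm + Y‖ ^ 2 + ‖Mm - Y‖ ^ 2 = 4 := by
        have h1 : ip (Mm + Y) (Mm + Y) + ip (Mm - Y) (Mm - Y) = 2 * ip Mm Mm + 2 * ip Y Y := by
          rw [ip_add_left, ip_add_right, ip_add_right, ip_sub_left, ip_sub_right, ip_sub_right]
          ring
        rw [ip_self_eq, ip_self_eq, ip_self_eq, ip_self_eq, hMm.2, hY1] at h1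
        linarith
      have hp1 := (le_abs_self _).trans (habs (Mm + Y) hMmYs)
      have hp2' : -(μ * ‖Mm - Y‖ ^ 2) ≤ ip (T (Mm - Y)) (Mm - Y) := by
        have := habs (Mm - Y) hMmYs'
        have h := neg_abs_le (ip (T (Mm - Y)) (Mm - Y))
        linarith
      have hsum : μ * ‖Mm + Y‖ ^ 2 + μ * ‖Mm - Y‖ ^ 2 = 4 * μ := by
        linear_combination μ * hpar
      have h5 : 4 * ip (T Mm) Y ≤ 4 * μ := by linarith [ep, em, hp1, hp2']
      rw [hipval] at h5
      linarith
  have hνeqμ : sSup S = μ := le_antisymm hνμ hμν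
  -- positivity of the supremum
  have hSpos : 0 < sSup S := by
    obtain ⟨N, hNs, hN0⟩ := hne
    have hTN : T N ≠ 0 := by rw [hTdef]; simpa using hN0
    have hNne : N ≠ 0 := fun h => hTN (by rw [h, map_zero])
    have hNn : (0:ℝ) < ‖N‖ := norm_pos_iff.mpr hNne
    have hsm : (‖N‖⁻¹ • N) ∈ sph := ⟨smul_isSymm hNs,
      by rw [norm_smul, Real.norm_eq_abs, abs_of_pos (by positivity),
        inv_mul_cancel₀ (ne_of_gt hNn)]⟩
    have hmem : ‖T (‖N‖⁻¹ • N)‖ ∈ S := (hmemS _).mpr ⟨_, hsm, rfl⟩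
    have hval : 0 < ‖T (‖N‖⁻¹ • N)‖ := by
      rw [_root_.map_smul, norm_smul, Real.norm_eq_abs, abs_of_pos (by positivity)]
      exact mul_pos (by positivity) (norm_pos_iff.mpr hTN)
    exact lt_of_lt_of_le hval (le_csSup hbdd hmem)
  -- the PSD maximizer and eigenvector
  obtain ⟨Q, R, hQ, hR, hXQR, hipQR⟩ := exists_posSemidef_decomp hM₂.1
  set M₀ := Q + R with hM₀def
  have hM₀psd : M₀.PosSemidef := psd_add hQ hR
  have hM₀s : M₀.IsSymm := psd_isSymm hM₀psd
  have hM₀n : ‖M₀‖ = 1 := by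
    have h2 : ‖M₀‖ ^ 2 = 1 := by rw [← ip_self_eq, hM₀def, hipQR, ip_self_eq, hM₂.2, one_pow]
    have h4 : (‖M₀‖ - 1) * (‖M₀‖ + 1) = 0 := by linear_combination h2
    rcases mul_eq_zero.mp h4 with h | h
    · linarith
    · linarith [norm_nonneg M₀]
  have hipM₀ : ip M₀ M₀ = 1 := by rw [ip_self_eq, hM₀n, one_pow]
  have hcross : ip (T R) Q = ip (T Q) R := by rw [hsa R Q, ip_comm]
  have e1 : ip (T M₂) M₂ = ip (T Q) Q + ip (T R) R - 2 * ip (T Q) R := by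
    rw [hXQR, map_sub, ip_sub_left, ip_sub_right, ip_sub_right]
    linarith [hcross]
  have e2 : ip (T M₀) M₀ = ip (T Q) Q + ip (T R) R + 2 * ip (T Q) R := by
    rw [hM₀def, map_add, ip_add_left, ip_add_right, ip_add_right]
    linarith [hcross]
  have hQR' := hpos hQ hR
  have h3 : ip (T M₀) M₀ ≤ μ := hRmax ⟨hM₀s, hM₀n⟩
  have hgM₀ : ip (T M₀) M₀ = μ := le_antisymm h3 (by rw [hμdef]; linarith [e1, e2])
  have hTM₀s : (T M₀).IsSymm := by
    rw [hTdef]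
    exact linOp_isSymm P A hAmeas hAint hM₀s
  set Z := μ • M₀ - T M₀ with hZdef
  have hZs : Z.IsSymm := by
    rw [Matrix.IsSymm, hZdef, Matrix.transpose_sub, Matrix.transpose_smul, hM₀s.eq, hTM₀s.eq]
  have hZc : 0 ≤ μ * ip Z Z - ip (T Z) Z := by
    have h := (le_abs_self _).trans (habs Z hZs)
    rw [← ip_self_eq] at h
    linarith
  have hquad : ∀ t : ℝ, 0 ≤ 0 + 2 * (μ * ip M₀ Z - ip (T M₀) Z) * t
      + (μ * ip Z Z - ip (T Z) Z) * t ^ 2 := by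
    intro t
    have hXts : (M₀ + t • Z).IsSymm := by
      rw [Matrix.IsSymm, Matrix.transpose_add, Matrix.transpose_smul, hM₀s.eq, hZs.eq]
    have hb := (le_abs_self _).trans (habs (M₀ + t • Z) hXts)
    rw [← ip_self_eq] at hb
    have eL : ip (T (M₀ + t • Z)) (M₀ + t • Z)
        = ip (T M₀) M₀ + 2 * t * ip (T M₀) Z + t ^ 2 * ip (T Z) Z := by
      rw [map_add, _root_.map_smul]
      simp only [ip_add_left, ip_add_right, ip_smul_left, ip_smul_right]
      have h1 : ip (T Z) M₀ = ip (T M₀) Z := by rw [hsa Z M₀, ip_comm]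
      linear_combination t * h1
    have eR : ip (M₀ + t • Z) (M₀ + t • Z)
        = ip M₀ M₀ + 2 * t * ip M₀ Z + t ^ 2 * ip Z Z := by
      simp only [ip_add_left, ip_add_right, ip_smul_left, ip_smul_right]
      linear_combination t * ip_comm Z M₀
    have key : μ * ip (M₀ + t • Z) (M₀ + t • Z) - ip (T (M₀ + t • Z)) (M₀ + t • Z)
        = 0 + 2 * (μ * ip M₀ Z - ip (T M₀) Z) * t + (μ * ip Z Z - ip (T Z) Z) * t ^ 2 := by
      rw [eL, eR, hipM₀]
      linear_combination -hgM₀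
    linarith [hb, key]
  have hb2 := quad_le hZc hquad
  have hb0 : μ * ip M₀ Z - ip (T M₀) Z = 0 := by
    have h5 : (μ * ip M₀ Z - ip (T M₀) Z) ^ 2 = 0 :=
      le_antisymm (by simpa using hb2) (sq_nonneg _)
    exact sq_eq_zero_iff.mp h5
  have hZZ : ip Z Z = 0 := by
    have h6 : ip Z Z = μ * ip M₀ Z - ip (T M₀) Z := by
      nth_rewrite 1 [hZdef]
      rw [ip_sub_left, ip_smul_left]
    rw [h6, hb0]
  have hZ0 : Z = 0 := by
    have h7 : ‖Z‖ ^ 2 = 0 := by rw [← ip_self_eq, hZZ]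
    exact norm_eq_zero.mp (sq_eq_zero_iff.mp h7)
  have heig : T M₀ = μ • M₀ := by
    rw [hZdef] at hZ0
    exact (sub_eq_zero.mp hZ0).symm
  have heig' : linOp P A M₀ = μ • M₀ := by
    rw [← TL_apply P A hAmeas hAint, ← hTdef]
    exact heig
  have hM₀ne : M₀ ≠ 0 := fun h => by rw [h, norm_zero] at hM₀n; exact one_ne_zero hM₀n.symm
  refine ⟨hSpos, ⟨M₀, hM₀psd, hM₀ne, ?_⟩, ⟨M₀, hM₀psd, ?_, ?_⟩⟩
  · rw [hνeqμ]; exact heig'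
  · rw [frobNorm_eq_norm]; exact hM₀n
  · rw [frobNorm_eq_norm, hνeqμ, heig', norm_smul, hM₀n, mul_one, Real.norm_eq_abs,
      abs_of_nonneg hμ0]
end

section
/- Let Z = (Z_1, …, Z_p) be a standard Gaussian vector in ℝ^p with p ≥ 1, and let Y = Σ_{j=1}^p sign(Z_j). Then for every k ∈ {1, …, p}, E[Z_k | σ(Y)] = √(2/π)·Y/p almost surely. -/
open MeasureTheory ProbabilityTheory Real Set Filter
open scoped ENNReal NNReal

noncomputable section
namespace CommitteeAux

lemma measurable_rsign : Measurable Real.sign := by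
  have h : Real.sign = fun r : ℝ => if r < 0 then (-1 : ℝ) else if 0 < r then 1 else 0 := rfl
  rw [h]
  exact Measurable.ite (measurableSet_lt measurable_id measurable_const) measurable_const
    (Measurable.ite (measurableSet_lt measurable_const measurable_id) measurable_const
      measurable_const)

lemma abs_rsign_le (x : ℝ) : |Real.sign x| ≤ 1 := by
  rcases Real.sign_apply_eq x with h | h | h <;> rw [h] <;> norm_num

def pdf1 : ℝ → ℝ := fun x => (√(2 * π))⁻¹ * rexp (-(1/2) * x ^ 2)

lemma pdf1_nonneg (x : ℝ) : 0 ≤ pdf1 x := by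
  unfold pdf1; positivity

lemma pdf_eq : gaussianPDFReal 0 1 = pdf1 := by
  ext x
  simp only [gaussianPDFReal, pdf1, NNReal.coe_one, mul_one, sub_zero]
  ring_nf

lemma gauss_eq_withDensity :
    gaussianReal 0 1 = volume.withDensity fun x => ((pdf1 x).toNNReal : ℝ≥0∞) := by
  rw [gaussianReal_of_var_ne_zero 0 one_ne_zero]
  congr 1
  ext x
  rw [gaussianPDF, pdf_eq]
  rfl

lemma measurable_pdf1nn : Measurable fun x => (pdf1 x).toNNReal := by
  rw [← pdf_eq]
  exact (measurable_gaussianPDFReal 0 1).real_toNNReal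

lemma integral_gauss (g : ℝ → ℝ) : ∫ x, g x ∂(gaussianReal 0 1) = ∫ x, pdf1 x * g x := by
  rw [gauss_eq_withDensity, integral_withDensity_eq_integral_smul measurable_pdf1nn]
  congr 1
  ext x
  simp [NNReal.smul_def, Real.coe_toNNReal _ (pdf1_nonneg x)]

lemma integrable_gauss_iff (g : ℝ → ℝ) :
    Integrable g (gaussianReal 0 1) ↔ Integrable (fun x => pdf1 x * g x) volume := by
  rw [gauss_eq_withDensity, integrable_withDensity_iff_integrable_smul measurable_pdf1nn]
  constructor <;> intro h <;> refine h.congr (Eventually.of_forall fun x => ?_) <;>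
    simp [NNReal.smul_def, Real.coe_toNNReal _ (pdf1_nonneg x)]


lemma integrable_xexp : Integrable (fun x : ℝ => x * rexp (-(1/2) * x ^ 2)) := by
  have := integrable_mul_exp_neg_mul_sq (b := 1/2) (by norm_num)
  refine this.congr (Eventually.of_forall fun x => ?_)
  norm_num

lemma int_xexp_Ioi : ∫ x in Ioi (0:ℝ), x * rexp (-(1/2) * x ^ 2) = 1 := by
  have A : ∀ x ∈ Ici (0:ℝ), HasDerivAt (fun y : ℝ => -rexp (-(1/2) * y ^ 2))
      (x * rexp (-(1/2) * x ^ 2)) x := by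
    intro x _
    have h := (((hasDerivAt_pow 2 x).const_mul (-(1/2 : ℝ))).exp).neg
    refine h.congr_deriv ?_
    simp
    ring
  have B : Tendsto (fun y : ℝ => -rexp (-(1/2) * y ^ 2)) atTop (nhds 0) := by
    rw [show (0:ℝ) = -0 by norm_num]
    refine Tendsto.neg ?_
    refine Real.tendsto_exp_atBot.comp ?_
    exact (tendsto_pow_atTop two_ne_zero).const_mul_atTop_of_neg (by norm_num)
  have := integral_Ioi_of_hasDerivAt_of_tendsto' A integrable_xexp.integrableOn B
  rw [this]
  norm_num

lemma int_xexp_Iio : ∫ x in Iio (0:ℝ), x * rexp (-(1/2) * x ^ 2) = -1 := by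
  have h := integral_comp_neg_Ioi (0:ℝ) (fun y : ℝ => y * rexp (-(1/2) * y ^ 2))
  simp only [neg_zero] at h
  have h2 : ∫ x in Ioi (0:ℝ), (fun y : ℝ => y * rexp (-(1/2) * y ^ 2)) (-x)
      = - ∫ x in Ioi (0:ℝ), x * rexp (-(1/2) * x ^ 2) := by
    rw [← integral_neg]
    congr 1 with x
    simp
  have h3 : ∫ x in Iic (0:ℝ), x * rexp (-(1/2) * x ^ 2)
      = ∫ x in Iio (0:ℝ), x * rexp (-(1/2) * x ^ 2) := by
    rw [integral_Iic_eq_integral_Iio]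
  rw [← h3, ← h, h2, int_xexp_Ioi]

lemma int_exp_Ioi : ∫ x in Ioi (0:ℝ), rexp (-(1/2) * x ^ 2) = √(2*π) / 2 := by
  have h := integral_gaussian_Ioi (1/2)
  rw [show π / (1/2 : ℝ) = 2 * π by ring] at h
  exact h

lemma int_exp_Iio : ∫ x in Iio (0:ℝ), rexp (-(1/2) * x ^ 2) = √(2*π) / 2 := by
  have h := integral_comp_neg_Ioi (0:ℝ) (fun y : ℝ => rexp (-(1/2) * y ^ 2))
  simp only [neg_zero, neg_sq] at h
  rw [integral_Iic_eq_integral_Iio] at h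
  rw [← h, int_exp_Ioi]


lemma sqrt2pi_pos : 0 < √(2*π) := Real.sqrt_pos.mpr (by positivity)

lemma integrable_pdf1 : Integrable pdf1 := by
  rw [← pdf_eq]; exact integrable_gaussianPDFReal 0 1

lemma integrable_pdf_x : Integrable (fun x => pdf1 x * x) := by
  have h := integrable_xexp.const_mul (√(2*π))⁻¹
  refine h.congr (Eventually.of_forall fun x => ?_)
  unfold pdf1
  ring

lemma int_pdf_x_Ioi : ∫ x in Ioi (0:ℝ), pdf1 x * x = (√(2*π))⁻¹ := by
  have h : (fun x => pdf1 x * x) = fun x => (√(2*π))⁻¹ * (x * rexp (-(1/2) * x ^ 2)) := by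
    funext x; unfold pdf1; ring
  rw [h, integral_const_mul, int_xexp_Ioi, mul_one]

lemma int_pdf_x_Iio : ∫ x in Iio (0:ℝ), pdf1 x * x = -(√(2*π))⁻¹ := by
  have h : (fun x => pdf1 x * x) = fun x => (√(2*π))⁻¹ * (x * rexp (-(1/2) * x ^ 2)) := by
    funext x; unfold pdf1; ring
  rw [h, integral_const_mul, int_xexp_Iio]
  ring

lemma int_pdf_Ioi : ∫ x in Ioi (0:ℝ), pdf1 x = 1/2 := by
  unfold pdf1
  rw [integral_const_mul, int_exp_Ioi]
  field_simp

lemma int_pdf_Iio : ∫ x in Iio (0:ℝ), pdf1 x = 1/2 := by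
  unfold pdf1
  rw [integral_const_mul, int_exp_Iio]
  field_simp

lemma gauss_split (g : ℝ → ℝ) (h1 : IntegrableOn (fun x => pdf1 x * g x) (Iio 0))
    (h2 : IntegrableOn (fun x => pdf1 x * g x) (Ioi 0)) :
    ∫ x, g x ∂(gaussianReal 0 1)
      = (∫ x in Iio (0:ℝ), pdf1 x * g x) + ∫ x in Ioi (0:ℝ), pdf1 x * g x := by
  rw [integral_gauss]
  have hs : (Iio (0:ℝ) ∪ Ioi 0 : Set ℝ) =ᵐ[volume] (univ : Set ℝ) := by
    rw [ae_eq_univ]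
    have : (Iio (0:ℝ) ∪ Ioi 0)ᶜ = {(0:ℝ)} := by
      ext x
      simp [not_or, le_antisymm_iff]
    rw [this]
    exact measure_singleton 0
  have hdisj : Disjoint (Iio (0:ℝ)) (Ioi 0) := by
    rw [Set.disjoint_left]
    intro x hx hx'
    exact absurd (mem_Ioi.mp hx') (not_lt.mpr (mem_Iio.mp hx).le)
  rw [← setIntegral_univ, ← setIntegral_congr_set hs,
    setIntegral_union hdisj measurableSet_Ioi h1 h2]

lemma gauss_sign_mul (ψ : ℝ → ℝ) :
    ∫ x, x * ψ (Real.sign x) ∂(gaussianReal 0 1) = (ψ 1 - ψ (-1)) * (√(2*π))⁻¹ := by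
  have e1 : EqOn (fun x => pdf1 x * (x * ψ (Real.sign x)))
      (fun x => pdf1 x * x * ψ 1) (Ioi 0) := fun x hx => by
    simp only [Real.sign_of_pos (mem_Ioi.mp hx)]
    ring
  have e2 : EqOn (fun x => pdf1 x * (x * ψ (Real.sign x)))
      (fun x => pdf1 x * x * ψ (-1)) (Iio 0) := fun x hx => by
    simp only [Real.sign_of_neg (mem_Iio.mp hx)]
    ring
  have i1 : IntegrableOn (fun x => pdf1 x * x * ψ 1) (Ioi (0:ℝ)) :=
    (integrable_pdf_x.mul_const (ψ 1)).integrableOn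
  have i2 : IntegrableOn (fun x => pdf1 x * x * ψ (-1)) (Iio (0:ℝ)) :=
    (integrable_pdf_x.mul_const (ψ (-1))).integrableOn
  rw [gauss_split _ (i2.congr_fun e2.symm measurableSet_Iio)
    (i1.congr_fun e1.symm measurableSet_Ioi),
    setIntegral_congr_fun measurableSet_Iio e2, setIntegral_congr_fun measurableSet_Ioi e1]
  have hmc : ∀ (s : Set ℝ) (c : ℝ), ∫ x in s, pdf1 x * x * c = (∫ x in s, pdf1 x * x) * c :=
    fun s c => by rw [integral_mul_const]
  rw [hmc, hmc, int_pdf_x_Ioi, int_pdf_x_Iio]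
  ring

lemma gauss_sign_sign (ψ : ℝ → ℝ) :
    ∫ x, Real.sign x * ψ (Real.sign x) ∂(gaussianReal 0 1) = (ψ 1 - ψ (-1)) / 2 := by
  have e1 : EqOn (fun x => pdf1 x * (Real.sign x * ψ (Real.sign x)))
      (fun x => pdf1 x * ψ 1) (Ioi 0) := fun x hx => by
    simp only [Real.sign_of_pos (mem_Ioi.mp hx)]
    ring
  have e2 : EqOn (fun x => pdf1 x * (Real.sign x * ψ (Real.sign x)))
      (fun x => pdf1 x * (-ψ (-1))) (Iio 0) := fun x hx => by
    simp only [Real.sign_of_neg (mem_Iio.mp hx)]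
    ring
  have i1 : IntegrableOn (fun x => pdf1 x * ψ 1) (Ioi (0:ℝ)) :=
    (integrable_pdf1.mul_const (ψ 1)).integrableOn
  have i2 : IntegrableOn (fun x => pdf1 x * (-ψ (-1))) (Iio (0:ℝ)) :=
    (integrable_pdf1.mul_const (-ψ (-1))).integrableOn
  rw [gauss_split _ (i2.congr_fun e2.symm measurableSet_Iio)
    (i1.congr_fun e1.symm measurableSet_Ioi),
    setIntegral_congr_fun measurableSet_Iio e2, setIntegral_congr_fun measurableSet_Ioi e1]
  have hmc : ∀ (s : Set ℝ) (c : ℝ), ∫ x in s, pdf1 x * c = (∫ x in s, pdf1 x) * c :=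
    fun s c => by rw [integral_mul_const]
  rw [hmc, hmc, int_pdf_Ioi, int_pdf_Iio]
  ring

lemma sqrt_mul_sqrt2pi : √(2/π) * √(2*π) = 2 := by
  rw [← Real.sqrt_mul (by positivity)]
  rw [show (2/π) * (2*π) = 2^2 by field_simp]
  exact Real.sqrt_sq (by norm_num)

lemma sqrt_ident : √(2/π) / 2 = (√(2*π))⁻¹ := by
  have h2 : √(2/π) = 2 / √(2*π) := eq_div_of_mul_eq sqrt2pi_pos.ne' sqrt_mul_sqrt2pi
  rw [h2, div_div, mul_comm, ← div_div, div_self two_ne_zero, one_div]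

lemma key1 (φ : ℝ → ℝ) (t : ℝ) :
    ∫ x, x * φ (Real.sign x + t) ∂(gaussianReal 0 1)
      = √(2/π) * ∫ x, Real.sign x * φ (Real.sign x + t) ∂(gaussianReal 0 1) := by
  have h1 := gauss_sign_mul (fun u => φ (u + t))
  have h2 := gauss_sign_sign (fun u => φ (u + t))
  rw [h1, h2, ← sqrt_ident]
  ring


section Pi

def S {m : ℕ} (z : Fin m → ℝ) : ℝ := ∑ j, Real.sign (z j)

lemma measurable_S {m : ℕ} : Measurable (S (m := m)) :=
  Finset.measurable_sum _ fun j _ => measurable_rsign.comp (measurable_pi_apply j)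

lemma integrable_id_gauss : Integrable (fun x : ℝ => x) (gaussianReal 0 1) := by
  rw [show (fun x : ℝ => x) = id from rfl, integrable_gauss_iff]
  exact integrable_pdf_x

lemma integrable_of_bounded {α : Type*} [MeasurableSpace α] (μ : Measure α)
    [IsProbabilityMeasure μ] {f : α → ℝ} (hf : AEStronglyMeasurable f μ) (C : ℝ)
    (h : ∀ x, |f x| ≤ C) : Integrable f μ :=
  Integrable.mono' (integrable_const C) hf
    (Eventually.of_forall fun x => by simpa [Real.norm_eq_abs] using h x)

lemma int_fst_abs {m : ℕ} (C : ℝ) :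
    Integrable (fun q : ℝ × (Fin m → ℝ) => C * |q.1|)
      ((gaussianReal 0 1).prod (Measure.pi fun _ : Fin m => gaussianReal 0 1)) := by
  rw [integrable_prod_iff (measurable_fst.abs.const_mul C).aestronglyMeasurable]
  constructor
  · refine Eventually.of_forall fun x => ?_
    simpa using integrable_const (μ := Measure.pi fun _ : Fin m => gaussianReal 0 1) (C * |x|)
  · simp only [integral_const, measure_univ, probReal_univ, one_smul]
    exact (integrable_id_gauss.abs.const_mul C).norm

lemma insertNth_S {n : ℕ} (k : Fin (n + 1)) (x : ℝ) (w : Fin n → ℝ) :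
    S (Fin.insertNth k x w) = Real.sign x + S w := by
  have h := Fin.sum_univ_succAbove (fun i => Real.sign (Fin.insertNth (α := fun _ => ℝ) k x w i)) k
  simpa [S, Fin.insertNth_apply_same, Fin.insertNth_apply_succAbove] using h

lemma P1 {n : ℕ} (k : Fin (n + 1)) (φ : ℝ → ℝ) (hφ : Measurable φ) (C : ℝ)
    (hC : ∀ y, |φ y| ≤ C) :
    ∫ z, z k * φ (S z) ∂(Measure.pi fun _ : Fin (n+1) => gaussianReal 0 1)
      = √(2/π) * ∫ z, Real.sign (z k) * φ (S z)
          ∂(Measure.pi fun _ : Fin (n+1) => gaussianReal 0 1) := by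
  have hC0 : 0 ≤ C := le_trans (abs_nonneg _) (hC 0)
  set γ1 := gaussianReal 0 1 with hγ1
  set μm := Measure.pi fun _ : Fin n => γ1 with hμm
  set e := MeasurableEquiv.piFinSuccAbove (fun _ : Fin (n+1) => ℝ) k with he
  have mp : MeasurePreserving e.symm (γ1.prod μm)
      (Measure.pi fun _ : Fin (n+1) => γ1) :=
    (measurePreserving_piFinSuccAbove (fun _ : Fin (n+1) => γ1) k).symm e
  have hse : ∀ (q : ℝ × (Fin n → ℝ)), e.symm q = Fin.insertNth k q.1 q.2 := fun q => rfl
  have hSm : Measurable (S (m := n)) := measurable_S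
  -- measurability of the two integrands on the product space
  have hm1 : Measurable fun q : ℝ × (Fin n → ℝ) => q.1 * φ (Real.sign q.1 + S q.2) :=
    measurable_fst.mul (hφ.comp ((measurable_rsign.comp measurable_fst).add
      (hSm.comp measurable_snd)))
  have hm2 : Measurable fun q : ℝ × (Fin n → ℝ) =>
      Real.sign q.1 * φ (Real.sign q.1 + S q.2) :=
    (measurable_rsign.comp measurable_fst).mul (hφ.comp
      ((measurable_rsign.comp measurable_fst).add (hSm.comp measurable_snd)))
  have hi1 : Integrable (fun q : ℝ × (Fin n → ℝ) => q.1 * φ (Real.sign q.1 + S q.2))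
      (γ1.prod μm) := by
    refine Integrable.mono' (int_fst_abs C) hm1.aestronglyMeasurable
      (Eventually.of_forall fun q => ?_)
    rw [Real.norm_eq_abs, abs_mul, mul_comm C]
    exact mul_le_mul_of_nonneg_left (hC _) (abs_nonneg _)
  have hi2 : Integrable (fun q : ℝ × (Fin n → ℝ) =>
      Real.sign q.1 * φ (Real.sign q.1 + S q.2)) (γ1.prod μm) := by
    refine integrable_of_bounded _ hm2.aestronglyMeasurable C fun q => ?_
    rw [abs_mul]
    calc |Real.sign q.1| * |φ (Real.sign q.1 + S q.2)| ≤ 1 * C :=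
      mul_le_mul (abs_rsign_le _) (hC _) (abs_nonneg _) one_pos.le
    _ = C := one_mul C
  -- transfer both sides to the product space
  have t1 : ∫ z, z k * φ (S z) ∂(Measure.pi fun _ : Fin (n+1) => γ1)
      = ∫ q : ℝ × (Fin n → ℝ), q.1 * φ (Real.sign q.1 + S q.2) ∂(γ1.prod μm) := by
    rw [← mp.integral_comp e.symm.measurableEmbedding (fun z => z k * φ (S z))]
    refine integral_congr_ae (Eventually.of_forall fun q => ?_)
    simp only [hse q, Fin.insertNth_apply_same, insertNth_S]
  have t2 : ∫ z, Real.sign (z k) * φ (S z) ∂(Measure.pi fun _ : Fin (n+1) => γ1)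
      = ∫ q : ℝ × (Fin n → ℝ), Real.sign q.1 * φ (Real.sign q.1 + S q.2) ∂(γ1.prod μm) := by
    rw [← mp.integral_comp e.symm.measurableEmbedding (fun z => Real.sign (z k) * φ (S z))]
    refine integral_congr_ae (Eventually.of_forall fun q => ?_)
    simp only [hse q, Fin.insertNth_apply_same, insertNth_S]
  rw [t1, t2]
  calc ∫ q : ℝ × (Fin n → ℝ), q.1 * φ (Real.sign q.1 + S q.2) ∂(γ1.prod μm)
      = ∫ x, ∫ w, x * φ (Real.sign x + S w) ∂μm ∂γ1 := integral_prod _ hi1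
    _ = ∫ w, ∫ x, x * φ (Real.sign x + S w) ∂γ1 ∂μm := integral_integral_swap hi1
    _ = ∫ w, √(2/π) * ∫ x, Real.sign x * φ (Real.sign x + S w) ∂γ1 ∂μm :=
        integral_congr_ae (Eventually.of_forall fun w => key1 φ (S w))
    _ = √(2/π) * ∫ w, ∫ x, Real.sign x * φ (Real.sign x + S w) ∂γ1 ∂μm :=
        integral_const_mul _ _
    _ = √(2/π) * ∫ x, ∫ w, Real.sign x * φ (Real.sign x + S w) ∂μm ∂γ1 :=
        congrArg (fun r => √(2/π) * r) (integral_integral_swap hi2).symm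
    _ = √(2/π) * ∫ q : ℝ × (Fin n → ℝ), Real.sign q.1 * φ (Real.sign q.1 + S q.2)
          ∂(γ1.prod μm) := congrArg (fun r => √(2/π) * r) (integral_prod _ hi2).symm


lemma P2 {m : ℕ} (j k : Fin m) (φ : ℝ → ℝ) :
    ∫ z, Real.sign (z j) * φ (S z) ∂(Measure.pi fun _ : Fin m => gaussianReal 0 1)
      = ∫ z, Real.sign (z k) * φ (S z) ∂(Measure.pi fun _ : Fin m => gaussianReal 0 1) := by
  set σ := Equiv.swap j k with hσ
  set E := MeasurableEquiv.piCongrLeft (fun _ : Fin m => ℝ) σ with hE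
  have mp : MeasurePreserving E (Measure.pi fun _ : Fin m => gaussianReal 0 1)
      (Measure.pi fun _ : Fin m => gaussianReal 0 1) :=
    measurePreserving_piCongrLeft (fun _ : Fin m => gaussianReal 0 1) σ
  have h := mp.integral_comp E.measurableEmbedding (fun z => Real.sign (z j) * φ (S z))
  rw [← h]
  refine integral_congr_ae (Eventually.of_forall fun w => ?_)
  have happ : ∀ i, E w (σ i) = w i := fun i =>
    MeasurableEquiv.piCongrLeft_apply_apply (β := fun _ : Fin m => ℝ) σ w i
  have hj : E w j = w k := by
    have h2 := happ k
    rwa [Equiv.swap_apply_right] at h2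
  have hS : S (E w) = S w := by
    unfold S
    rw [← Equiv.sum_comp σ (fun i => Real.sign (E w i))]
    simp only [happ]
  simp only [hj, hS]

lemma int_fst {m : ℕ} :
    Integrable (fun q : ℝ × (Fin m → ℝ) => q.1)
      ((gaussianReal 0 1).prod (Measure.pi fun _ : Fin m => gaussianReal 0 1)) := by
  rw [integrable_prod_iff measurable_fst.aestronglyMeasurable]
  constructor
  · refine Eventually.of_forall fun x => ?_
    simpa using integrable_const (μ := Measure.pi fun _ : Fin m => gaussianReal 0 1) x
  · simp only [integral_const, measure_univ, probReal_univ, one_smul]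
    exact integrable_id_gauss.norm

lemma integrable_eval {n : ℕ} (k : Fin (n + 1)) :
    Integrable (fun z : Fin (n+1) → ℝ => z k)
      (Measure.pi fun _ : Fin (n+1) => gaussianReal 0 1) := by
  set e := MeasurableEquiv.piFinSuccAbove (fun _ : Fin (n+1) => ℝ) k with he
  have mp : MeasurePreserving e.symm
      ((gaussianReal 0 1).prod (Measure.pi fun _ : Fin n => gaussianReal 0 1))
      (Measure.pi fun _ : Fin (n+1) => gaussianReal 0 1) :=
    (measurePreserving_piFinSuccAbove (fun _ : Fin (n+1) => gaussianReal 0 1) k).symm e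
  refine (mp.integrable_comp_emb e.symm.measurableEmbedding).mp ?_
  refine int_fst.congr (Eventually.of_forall fun q => ?_)
  show q.1 = ((fun z : Fin (n+1) → ℝ => z k) ∘ e.symm) q
  have hse : e.symm q = Fin.insertNth k q.1 q.2 := rfl
  simp [Function.comp, hse, Fin.insertNth_apply_same]

lemma MAIN {n : ℕ} (k : Fin (n+1)) (φ : ℝ → ℝ) (hφ : Measurable φ) (C : ℝ)
    (hC : ∀ y, |φ y| ≤ C) :
    ∫ z, z k * φ (S z) ∂(Measure.pi fun _ : Fin (n+1) => gaussianReal 0 1)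
      = ∫ z, √(2/π) * S z / ((n:ℝ)+1) * φ (S z)
          ∂(Measure.pi fun _ : Fin (n+1) => gaussianReal 0 1) := by
  set μ := Measure.pi fun _ : Fin (n+1) => gaussianReal 0 1 with hμ
  have hint : ∀ j : Fin (n+1), Integrable (fun z => Real.sign (z j) * φ (S z)) μ := by
    intro j
    refine integrable_of_bounded μ ((measurable_rsign.comp (measurable_pi_apply j)).mul
      (hφ.comp measurable_S)).aestronglyMeasurable C fun z => ?_
    rw [abs_mul]
    calc |Real.sign (z j)| * |φ (S z)| ≤ 1 * C :=
      mul_le_mul (abs_rsign_le _) (hC _) (abs_nonneg _) one_pos.le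
    _ = C := one_mul C
  have h1 : ∫ z, √(2/π) * S z / ((n:ℝ)+1) * φ (S z) ∂μ
      = (√(2/π) / ((n:ℝ)+1)) * ∑ j : Fin (n+1), ∫ z, Real.sign (z j) * φ (S z) ∂μ := by
    rw [← integral_finset_sum _ (fun j _ => hint j), ← integral_const_mul]
    refine integral_congr_ae (Eventually.of_forall fun z => ?_)
    simp only
    rw [← Finset.sum_mul]
    show √(2/π) * S z / ((n:ℝ)+1) * φ (S z) = √(2/π) / ((n:ℝ)+1) * (S z * φ (S z))
    ring
  have hn0 : ((n:ℝ)+1) ≠ 0 := by positivity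
  rw [h1, Finset.sum_congr rfl (fun j _ => P2 j k φ), Finset.sum_const, Finset.card_univ,
    Fintype.card_fin, P1 k φ hφ C hC, nsmul_eq_mul]
  push_cast
  field_simp

end Pi

end CommitteeAux
end

open CommitteeAux in
/-- Committee machine: if `Z` is a standard Gaussian vector in `ℝ^p` and
`Y = ∑_j sign(Z_j)`, then `E[Z_k | σ(Y)] = √(2/π)·Y/p` a.s. for every `k`. -/
theorem committee_conditional_mean {Ω : Type*} [MeasurableSpace Ω]
    (P : Measure Ω) [IsProbabilityMeasure P] {p : ℕ} (hp : 1 ≤ p)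
    (Z : Ω → Fin p → ℝ) (hZmeas : Measurable Z)
    (hZ : Measure.map Z P = Measure.pi fun _ : Fin p => gaussianReal 0 1)
    (Y : Ω → ℝ) (hY : Y = fun ω => ∑ j, Real.sign (Z ω j)) :
    ∀ k : Fin p,
      P[(fun ω => Z ω k) | MeasurableSpace.comap Y inferInstance]
        =ᵐ[P] fun ω => Real.sqrt (2 / Real.pi) * Y ω / p := by
  obtain ⟨n, rfl⟩ : ∃ n, p = n + 1 := ⟨p - 1, (Nat.succ_pred_eq_of_pos hp).symm⟩
  intro k
  have hYS : ∀ ω, Y ω = S (Z ω) := fun ω => by rw [hY]; rfl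
  have hYm : Measurable Y := by
    rw [hY]
    exact (measurable_S.comp hZmeas : Measurable fun ω => S (Z ω))
  have hm : MeasurableSpace.comap Y inferInstance ≤ (inferInstance : MeasurableSpace Ω) :=
    hYm.comap_le
  haveI : IsFiniteMeasure (P.trim hm) := isFiniteMeasure_trim hm
  have hZk_int : Integrable (fun ω => Z ω k) P := by
    have h0 : Integrable (fun z : Fin (n+1) → ℝ => z k) (Measure.map Z P) := by
      rw [hZ]; exact integrable_eval k
    have hmeas' : AEStronglyMeasurable (fun z : Fin (n+1) → ℝ => z k) (Measure.map Z P) := by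
      rw [hZ]; exact (measurable_pi_apply k).aestronglyMeasurable
    exact (integrable_map_measure hmeas' hZmeas.aemeasurable).mp h0
  have hg_meas : Measurable fun ω => √(2 / π) * Y ω / ((n + 1 : ℕ) : ℝ) :=
    (hYm.const_mul _).div_const _
  have hYb : ∀ ω, |Y ω| ≤ ((n + 1 : ℕ) : ℝ) := by
    intro ω
    rw [hY]
    calc |∑ j, Real.sign (Z ω j)| ≤ ∑ j, |Real.sign (Z ω j)| :=
        Finset.abs_sum_le_sum_abs _ _
      _ ≤ ∑ _j : Fin (n+1), (1:ℝ) := Finset.sum_le_sum fun j _ => abs_rsign_le _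
      _ = ((n + 1 : ℕ) : ℝ) := by simp
  have hg_int : Integrable (fun ω => √(2 / π) * Y ω / ((n + 1 : ℕ) : ℝ)) P := by
    refine integrable_of_bounded P hg_meas.aestronglyMeasurable (√(2/π)) fun ω => ?_
    rw [abs_div, abs_mul, abs_of_nonneg (Real.sqrt_nonneg _), Nat.abs_cast]
    rw [div_le_iff₀ (by positivity)]
    exact mul_le_mul_of_nonneg_left (hYb ω) (Real.sqrt_nonneg _)
  have hYm' : Measurable[MeasurableSpace.comap Y inferInstance] Y :=
    Measurable.of_comap_le le_rfl
  have hgm : AEStronglyMeasurable[MeasurableSpace.comap Y inferInstance]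
      (fun ω => √(2 / π) * Y ω / ((n + 1 : ℕ) : ℝ)) P :=
    StronglyMeasurable.aestronglyMeasurable
      (((hYm'.const_mul _).div_const _).stronglyMeasurable)
  refine (ae_eq_condExp_of_forall_setIntegral_eq hm hZk_int
    (fun s _ _ => hg_int.integrableOn) (fun s hs _ => ?_) hgm).symm
  obtain ⟨A, hA, rfl⟩ := hs
  set φ : ℝ → ℝ := A.indicator fun _ => (1:ℝ) with hφ
  have hφm : Measurable φ := measurable_const.indicator hA
  have hφb : ∀ y, |φ y| ≤ 1 := fun y => by
    by_cases h : y ∈ A <;> simp [hφ, h]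
  have hpre : MeasurableSet (Y ⁻¹' A) := hYm hA
  have hFm : Measurable fun z : Fin (n+1) → ℝ => z k * φ (S z) :=
    (measurable_pi_apply k).mul (hφm.comp measurable_S)
  have hGm : Measurable fun z : Fin (n+1) → ℝ => √(2/π) * S z / ((n:ℝ)+1) * φ (S z) :=
    ((measurable_S.const_mul _).div_const _).mul (hφm.comp measurable_S)
  have t1 : ∫ ω in Y ⁻¹' A, Z ω k ∂P
      = ∫ z, z k * φ (S z) ∂(Measure.pi fun _ : Fin (n+1) => gaussianReal 0 1) := by
    rw [← hZ, integral_map hZmeas.aemeasurable (by rw [hZ]; exact hFm.aestronglyMeasurable),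
      ← integral_indicator hpre]
    refine integral_congr_ae (Eventually.of_forall fun ω => ?_)
    by_cases h : Y ω ∈ A
    · have h' : S (Z ω) ∈ A := hYS ω ▸ h
      simp [Set.indicator_of_mem, h, h', hφ]
    · have h' : S (Z ω) ∉ A := fun hc => h ((hYS ω).symm ▸ hc)
      simp [Set.indicator_of_notMem, h, h', hφ]
  have t2 : ∫ ω in Y ⁻¹' A, √(2 / π) * Y ω / ((n + 1 : ℕ) : ℝ) ∂P
      = ∫ z, √(2/π) * S z / ((n:ℝ)+1) * φ (S z)
          ∂(Measure.pi fun _ : Fin (n+1) => gaussianReal 0 1) := by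
    rw [← hZ, integral_map hZmeas.aemeasurable (by rw [hZ]; exact hGm.aestronglyMeasurable),
      ← integral_indicator hpre]
    refine integral_congr_ae (Eventually.of_forall fun ω => ?_)
    by_cases h : Y ω ∈ A
    · have h' : S (Z ω) ∈ A := hYS ω ▸ h
      have e2 : φ (S (Z ω)) = 1 := by rw [hφ]; exact Set.indicator_of_mem h' _
      refine Eq.trans (Set.indicator_of_mem (show ω ∈ Y ⁻¹' A from h) _) ?_
      show √(2 / π) * Y ω / ((n + 1 : ℕ) : ℝ) = √(2 / π) * S (Z ω) / ((n:ℝ) + 1) * φ (S (Z ω))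
      rw [e2, hYS ω]
      push_cast
      ring
    · have h' : S (Z ω) ∉ A := fun hc => h ((hYS ω).symm ▸ hc)
      simp [Set.indicator_of_notMem, h, h', hφ]
  rw [t1, t2]
  exact (MAIN k φ hφm 1 hφb).symm
end
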